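/- Fix γ > 1 and n = 3, ε = γ-1. Consider β(μ) = 2μ/(ε(1+μ)), β₂(μ) = -V_+(μ)/(1+V_+(μ))², where V_+(μ) = (𝔞₃ + √𝔔₃)/2 with 𝔞₃ = ((ε-2)/(2ε))μ - 1 and 𝔔₃ = ((ε-2)/(2ε))²μ² - ((ε+2)/ε)μ + 1. Then for all sufficiently small μ > 0, β(μ) > β₂(μ). -/
import Mathlib

set_option maxHeartbeats 1000000

theorem stmt_17 (γ : ℝ) (hγ : 1 < γ) (ε : ℝ) (hε : ε = γ - 1)
    (β β₂ Vp : ℝ → ℝ)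
    (hβ : ∀ μ, β μ = 2 * μ / (ε * (1 + μ)))
    (hVp : ∀ μ, Vp μ = ((((ε - 2) / (2 * ε)) * μ - 1)
        + Real.sqrt (((ε - 2) / (2 * ε)) ^ 2 * μ ^ 2 - ((ε + 2) / ε) * μ + 1)) / 2)
    (hβ₂ : ∀ μ, β₂ μ = -(Vp μ) / (1 + Vp μ) ^ 2) :
    ∃ μ₀ > 0, ∀ μ, 0 < μ → μ < μ₀ → β μ > β₂ μ := by
  have hε0 : 0 < ε := by linarith
  refine ⟨min (1/8) (min (ε/(2*(ε+2)^2)) (ε/(4*(ε+6)))), by positivity, ?_⟩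
  intro μ hμ hμ'
  have hμ1 : μ < 1/8 := lt_of_lt_of_le hμ' (min_le_left _ _)
  have hμ2 : μ < ε/(2*(ε+2)^2) :=
    lt_of_lt_of_le hμ' ((min_le_right _ _).trans (min_le_left _ _))
  have hμ3 : μ < ε/(4*(ε+6)) :=
    lt_of_lt_of_le hμ' ((min_le_right _ _).trans (min_le_right _ _))
  have hμ2' : 2*(ε+2)^2*μ < ε := by
    rw [lt_div_iff₀ (by positivity)] at hμ2; linarith
  have hμ3' : 4*(ε+6)*μ < ε := by
    rw [lt_div_iff₀ (by positivity)] at hμ3; linarith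
  have h24 : 24*μ < ε := by nlinarith
  obtain ⟨c, hcdef⟩ : ∃ x : ℝ, x = (ε+2)/ε := ⟨_, rfl⟩
  obtain ⟨d, hddef⟩ : ∃ x : ℝ, x = (ε-2)/(2*ε) := ⟨_, rfl⟩
  have hVμ := hVp μ
  rw [← hcdef, ← hddef] at hVμ
  obtain ⟨s, hsdef⟩ : ∃ x : ℝ, x = Real.sqrt (d^2*μ^2 - c*μ + 1) := ⟨_, rfl⟩
  rw [← hsdef] at hVμ
  -- hVμ : Vp μ = (d*μ - 1 + s)/2
  have hc : ε * c = ε + 2 := by rw [hcdef]; field_simp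
  have hd : 2*ε*d = ε - 2 := by rw [hddef]; field_simp
  have hcμ0 : 0 ≤ c*μ := by
    have : 0 ≤ c := by rw [hcdef]; positivity
    positivity
  have hx4 : c*μ ≤ 1/4 := by nlinarith [hc, hμ2', hε0, hμ.le]
  have hz2 : 0 ≤ (c*μ)^2 * (1/4 - c*μ) := by nlinarith [sq_nonneg (c*μ)]
  have hz3 : 0 ≤ (c*μ)^2 * (c*μ) * (1/4 - c*μ) := by nlinarith [mul_nonneg hcμ0 hz2]
  have hs : 1 - c*μ/2 - (c*μ)^2/2 ≤ s := by
    rw [hsdef]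
    apply Real.le_sqrt_of_sq_le
    nlinarith [sq_nonneg (d*μ), hz2, hz3, sq_nonneg (c*μ), hcμ0]
  have hdc : ε*(2*(d*μ) - c*μ) = -4*μ := by linear_combination μ*hd - μ*hc
  have h6 : 2*(d*μ) - c*μ > -1/6 := by nlinarith [hdc, h24, hε0]
  have hsq4 : (c*μ)^2 ≤ 1/16 := by nlinarith [hx4, hcμ0]
  have hV1 : (9:ℝ)/10 ≤ 1 + Vp μ := by
    rw [hVμ]; linarith [hs, h6, hsq4]
  have hc3 : ε*(c*μ)^2 = (ε+2)*(c*μ)*μ := by linear_combination (c*μ^2)*hc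
  have hc2 : ε*((ε+2)*(c*μ)) = (ε+2)^2*μ := by linear_combination (ε+2)*μ*hc
  have h7 : (ε+2)*(c*μ) < 1/2 := by nlinarith [hc2, hμ2', hε0]
  have h7μ : (ε+2)*(c*μ)*μ ≤ 1/2*μ := by nlinarith [h7, hμ.le]
  have hV2 : ε * (-(Vp μ)) ≤ 9/8 * μ := by
    rw [hVμ]
    have hsε := mul_le_mul_of_nonneg_left hs hε0.le
    nlinarith [hsε, hdc, hc3, h7μ]
  have hV1' : (0:ℝ) < 1 + Vp μ := by linarith
  have hden1 : (0:ℝ) < (1 + Vp μ)^2 := pow_pos hV1' 2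
  have hden2 : (0:ℝ) < ε*(1+μ) := by positivity
  rw [hβ, hβ₂, gt_iff_lt, div_lt_div_iff₀ hden1 hden2]
  have hsq : (81:ℝ)/100 ≤ (1+Vp μ)^2 := by
    have := pow_le_pow_left₀ (by norm_num : (0:ℝ) ≤ 9/10) hV1 2
    nlinarith [this]
  have h3 : -(Vp μ)*(ε*(1+μ)) ≤ 81/64*μ := by
    rcases le_or_gt 0 (-(Vp μ)*ε) with h | h
    · nlinarith [hV2, hμ1, hμ]
    · nlinarith [hμ, hμ1, h]
  nlinarith [hsq, hμ, h3]
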